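/- arXiv:1207.5809 — 4 statements merged into one kernel-verified Lean document; each statement's English description precedes it below -/
import Mathlib

section
/- Let γ>0, β∈(0,1], T>0. Suppose a:[0,T]→ℝ₊ is measurable, k≥0 is a constant, and v:[0,T]→ℝ₊ satisfies the integral equation v(r) = k + a(r) − γ∫_r^T v(s)^{1+β} ds for all 0≤r≤T. Then v(t) ≤ a(t) + k/(1+γβ(T−t)k^β)^{1/β} for all 0≤t≤T. -/
open MeasureTheory Set

theorem gronwall_style_lemma
    (γ β T k : ℝ) (hγ : 0 < γ) (hβ0 : 0 < β) (hβ1 : β ≤ 1) (hT : 0 < T) (hk : 0 ≤ k)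
    (a v : ℝ → ℝ)
    (ha_meas : Measurable a)
    (ha : ∀ t ∈ Icc (0:ℝ) T, 0 ≤ a t)
    (hv : ∀ t ∈ Icc (0:ℝ) T, 0 ≤ v t)
    (hint : IntegrableOn (fun s => v s ^ (1 + β)) (Icc (0:ℝ) T))
    (heq : ∀ r ∈ Icc (0:ℝ) T, v r = k + a r - γ * ∫ s in r..T, v s ^ (1 + β)) :
    ∀ t ∈ Icc (0:ℝ) T,
      v t ≤ a t + k / (1 + γ * β * (T - t) * k ^ β) ^ (1 / β) := by
  intro t₀ ht₀
  -- basic abbreviations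
  set g : ℝ → ℝ := fun t => 1 + γ * β * (T - t) * k ^ β with hg_def
  set w : ℝ → ℝ := fun t => k * g t ^ (-(1 / β)) with hw_def
  have hβne : β ≠ 0 := hβ0.ne'
  have hgpos : ∀ t ∈ Icc (0:ℝ) T, 0 < g t := by
    intro t ht
    have h1 : 0 ≤ T - t := sub_nonneg.2 ht.2
    have : 0 ≤ γ * β * (T - t) * k ^ β := by positivity
    simp only [hg_def]; linarith
  have hwk : ∀ t ∈ Icc (0:ℝ) T, w t = k / g t ^ (1 / β) := by
    intro t ht
    show k * g t ^ (-(1 / β)) = k / g t ^ (1 / β)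
    rw [Real.rpow_neg (hgpos t ht).le]
    ring
  have hw_nonneg : ∀ t ∈ Icc (0:ℝ) T, 0 ≤ w t := by
    intro t ht
    exact mul_nonneg hk (Real.rpow_nonneg (hgpos t ht).le _)
  have hwT : w T = k := by
    simp [hw_def, hg_def]
  have hgcont : Continuous g := by fun_prop
  have hwcont : ContinuousOn w (Icc (0:ℝ) T) := by
    refine continuousOn_const.mul ?_
    exact hgcont.continuousOn.rpow_const fun t ht => Or.inl (hgpos t ht).ne'
  -- derivative of w
  have hderiv : ∀ t ∈ Icc (0:ℝ) T, HasDerivAt w (γ * w t ^ (1 + β)) t := by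
    intro t ht
    have hgt := hgpos t ht
    have h1 : HasDerivAt (fun x : ℝ => T - x) (-1) t := (hasDerivAt_id t).const_sub T
    have h2 : HasDerivAt g (γ * β * -1 * k ^ β) t :=
      ((h1.const_mul (γ * β)).mul_const (k ^ β)).const_add 1
    have h3 := (h2.rpow_const (p := -(1 / β)) (Or.inl hgt.ne')).const_mul k
    convert h3 using 1
    case e'_4 => rfl
    case e'_5 => rfl
    have e1 : w t ^ (1 + β) = k ^ (1 + β) * (g t ^ (-(1 / β))) ^ (1 + β) := by
      rw [hw_def]
      exact Real.mul_rpow hk (Real.rpow_nonneg hgt.le _)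
    have e2 : (g t ^ (-(1 / β))) ^ (1 + β) = g t ^ (-(1 / β) - 1) := by
      rw [← Real.rpow_mul hgt.le]
      congr 1
      field_simp
      ring
    have e3 : k ^ (1 + β) = k * k ^ β := by
      rw [Real.rpow_add' hk (by positivity), Real.rpow_one]
    rw [e1, e2, e3]
    field_simp
  -- FTC for w
  have hFTC : ∀ t₁ ∈ Icc (0:ℝ) T, ∀ t₂ ∈ Icc (0:ℝ) T, t₁ ≤ t₂ →
      (∫ s in t₁..t₂, γ * w s ^ (1 + β)) = w t₂ - w t₁ := by
    intro t₁ ht₁ t₂ ht₂ h12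
    have hsub : uIcc t₁ t₂ ⊆ Icc (0:ℝ) T := by
      rw [uIcc_of_le h12]
      exact Icc_subset_Icc ht₁.1 ht₂.2
    refine intervalIntegral.integral_eq_sub_of_hasDerivAt (fun s hs => hderiv s (hsub hs)) ?_
    apply ContinuousOn.intervalIntegrable
    refine continuousOn_const.mul ?_
    exact (hwcont.mono hsub).rpow_const fun x hx => Or.inr (by positivity)
  -- interval integrability of v^(1+β)
  have hii : ∀ t₁ ∈ Icc (0:ℝ) T, ∀ t₂ ∈ Icc (0:ℝ) T,
      IntervalIntegrable (fun s => v s ^ (1 + β)) volume t₁ t₂ := by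
    intro t₁ ht₁ t₂ ht₂
    apply MeasureTheory.IntegrableOn.intervalIntegrable
    apply hint.mono_set
    rw [← uIcc_of_le hT.le]
    exact uIcc_subset_uIcc (by rw [uIcc_of_le hT.le]; exact ht₁)
      (by rw [uIcc_of_le hT.le]; exact ht₂)
  -- the function U
  set U : ℝ → ℝ := fun t => k - γ * ∫ s in t..T, v s ^ (1 + β) with hU_def
  have hvU : ∀ t ∈ Icc (0:ℝ) T, v t - a t = U t := by
    intro t ht
    rw [heq t ht, hU_def]
    ring
  have hUT : U T = k := by simp [hU_def]
  -- continuity of U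
  have hUcont : ContinuousOn U (Icc (0:ℝ) T) := by
    have hF : ContinuousOn (fun t => ∫ s in (0:ℝ)..t, v s ^ (1 + β)) (Icc (0:ℝ) T) := by
      have := intervalIntegral.continuousOn_primitive_interval
        (a := (0:ℝ)) (b := T) (μ := volume) (f := fun s => v s ^ (1 + β)) ?_
      · rwa [uIcc_of_le hT.le] at this
      · rw [uIcc_of_le hT.le]; exact hint
    have heqU : ∀ t ∈ Icc (0:ℝ) T,
        U t = k - γ * ((∫ s in (0:ℝ)..T, v s ^ (1 + β)) - ∫ s in (0:ℝ)..t, v s ^ (1 + β)) := by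
      intro t ht
      have hadd := intervalIntegral.integral_add_adjacent_intervals
        (hii 0 (left_mem_Icc.2 hT.le) t ht) (hii t ht T (right_mem_Icc.2 hT.le))
      rw [hU_def]
      simp only
      rw [← hadd]
      ring
    refine ContinuousOn.congr ?_ heqU
    exact continuousOn_const.sub (continuousOn_const.mul (continuousOn_const.sub hF))
  -- by contradiction
  by_contra hcon
  push_neg at hcon
  rw [← hwk t₀ ht₀] at hcon
  -- the set S
  set S : Set ℝ := {t ∈ Icc t₀ T | U t ≤ w t} with hS_def
  have hIccsub : Icc t₀ T ⊆ Icc (0:ℝ) T := Icc_subset_Icc ht₀.1 le_rfl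
  have hSclosed : IsClosed S :=
    isClosed_Icc.isClosed_le (hUcont.mono hIccsub) (hwcont.mono hIccsub)
  have hTS : T ∈ S := ⟨right_mem_Icc.2 ht₀.2, by rw [hUT, hwT]⟩
  set t₁ : ℝ := sInf S with ht₁_def
  have ht₁S : t₁ ∈ S := hSclosed.csInf_mem ⟨T, hTS⟩ ⟨t₀, fun x hx => hx.1.1⟩
  have ht₁mem : t₁ ∈ Icc (0:ℝ) T := hIccsub ht₁S.1
  have h01 : t₀ ≤ t₁ := ht₁S.1.1
  -- pointwise comparison on Ioo t₀ t₁
  have hptwise : ∀ s ∈ Ioo t₀ t₁, w s ^ (1 + β) ≤ v s ^ (1 + β) := by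
    intro s hs
    have hsmem : s ∈ Icc (0:ℝ) T := ⟨le_trans ht₀.1 hs.1.le, le_trans hs.2.le ht₁mem.2⟩
    have hsnotS : s ∉ S := fun hmem => absurd (csInf_le ⟨t₀, fun x hx => hx.1.1⟩ hmem) (not_le.2 hs.2)
    have hws : w s < U s := by
      by_contra h
      exact hsnotS ⟨⟨hs.1.le, hsmem.2⟩, not_lt.1 h⟩
    have hvs : U s ≤ v s := by
      have := hvU s hsmem
      have has := ha s hsmem
      linarith
    exact Real.rpow_le_rpow (hw_nonneg s hsmem) (le_trans hws.le hvs) (by positivity)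
  -- integral comparison
  have hmono : (∫ s in t₀..t₁, w s ^ (1 + β)) ≤ ∫ s in t₀..t₁, v s ^ (1 + β) := by
    rw [intervalIntegral.integral_of_le h01, intervalIntegral.integral_of_le h01,
      MeasureTheory.integral_Ioc_eq_integral_Ioo, MeasureTheory.integral_Ioc_eq_integral_Ioo]
    have hIoosub : Ioo t₀ t₁ ⊆ Icc (0:ℝ) T := fun x hx =>
      ⟨le_trans ht₀.1 hx.1.le, le_trans hx.2.le ht₁mem.2⟩
    refine setIntegral_mono_on ?_ ?_ measurableSet_Ioo hptwise
    · have : ContinuousOn (fun s => w s ^ (1 + β)) (Icc (0:ℝ) T) :=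
        hwcont.rpow_const fun x hx => Or.inr (by positivity)
      exact (this.integrableOn_compact isCompact_Icc).mono_set hIoosub
    · exact hint.mono_set hIoosub
  -- split the integral for U
  have hsplit : U t₀ = U t₁ - γ * ∫ s in t₀..t₁, v s ^ (1 + β) := by
    rw [hU_def]
    simp only
    rw [← intervalIntegral.integral_add_adjacent_intervals (hii t₀ ht₀ t₁ ht₁mem)
      (hii t₁ ht₁mem T (right_mem_Icc.2 hT.le))]
    ring
  -- FTC identity
  have hwid : γ * (∫ s in t₀..t₁, w s ^ (1 + β)) = w t₁ - w t₀ := by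
    rw [← intervalIntegral.integral_const_mul]
    exact hFTC t₀ ht₀ t₁ ht₁mem h01
  -- conclude
  have hU01 : U t₀ ≤ w t₀ := by
    have h1 : γ * (∫ s in t₀..t₁, w s ^ (1 + β)) ≤ γ * ∫ s in t₀..t₁, v s ^ (1 + β) :=
      mul_le_mul_of_nonneg_left hmono hγ.le
    have h2 : U t₁ ≤ w t₁ := ht₁S.2
    linarith [hsplit, hwid]
  have := hvU t₀ ht₀
  linarith
end

section
/- Let γ>0, β∈(0,1], λ≥0 and 0≤r≤t. Then the function v(s) := λ/(1+γβ(t−s)λ^β)^{1/β} for s≤t, and v(s):=0 for s>t, satisfies v(r) = λ·1_{[0,t]}(r) − γ∫_r^T v(s)^{1+β} ds for any T≥t. -/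
open MeasureTheory Set

theorem log_laplace_dirac_impulse
    (γ β lam r t : ℝ) (hγ : 0 < γ) (hβ0 : 0 < β) (hβ1 : β ≤ 1) (hlam : 0 ≤ lam)
    (hr : 0 ≤ r) (hrt : r ≤ t)
    (v : ℝ → ℝ)
    (hv : ∀ s, v s = if s ≤ t then lam / (1 + γ * β * (t - s) * lam ^ β) ^ (1 / β) else 0) :
    ∀ T : ℝ, t ≤ T →
      v r = Set.indicator (Icc (0:ℝ) t) (fun _ => lam) r - γ * ∫ s in r..T, v s ^ (1 + β) := by
  intro T hT
  have hind : Set.indicator (Icc (0:ℝ) t) (fun _ => lam) r = lam :=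
    Set.indicator_of_mem (Set.mem_Icc.mpr ⟨hr, hrt⟩) _
  rw [hind]
  have h1β : (0:ℝ) < 1 + β := by linarith
  rcases eq_or_lt_of_le hlam with h0 | hlam'
  · -- lam = 0 : everything vanishes
    have hv0 : ∀ s, v s = 0 := by
      intro s
      rw [hv s]
      split_ifs with h
      · rw [← h0]; simp
      · rfl
    have hint0 : (∫ s in r..T, v s ^ (1 + β)) = 0 := by
      have hz : ∀ s, v s ^ (1 + β) = 0 := by
        intro s; rw [hv0 s]; exact Real.zero_rpow (ne_of_gt h1β)
      simp only [hz, intervalIntegral.integral_zero]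
    rw [hint0, hv0 r, ← h0]
    ring
  · -- lam > 0
    set c : ℝ := γ * β * lam ^ β with hc_def
    have hc : 0 < c := by positivity
    set G : ℝ → ℝ := fun s => lam * (1 + c * (t - s)) ^ (-(1 / β)) with hG_def
    have hbase : ∀ s ≤ t, (0:ℝ) < 1 + c * (t - s) := by
      intro s hs; nlinarith
    have hvG : ∀ s ≤ t, v s = G s := by
      intro s hs
      have hb_eq : 1 + γ * β * (t - s) * lam ^ β = 1 + c * (t - s) := by
        rw [hc_def]; ring
      rw [hv s, if_pos hs]
      show _ = lam * (1 + c * (t - s)) ^ (-(1 / β))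
      rw [hb_eq, Real.rpow_neg (le_of_lt (hbase s hs)), div_eq_mul_inv]
    -- derivative of G
    have hderiv : ∀ s ∈ Set.uIcc r t, HasDerivAt G (γ * (G s) ^ (1 + β)) s := by
      intro s hs
      rw [Set.uIcc_of_le hrt] at hs
      have hst : s ≤ t := hs.2
      have hb : (0:ℝ) < 1 + c * (t - s) := hbase s hst
      have hinner : HasDerivAt (fun s : ℝ => 1 + c * (t - s)) (-c) s := by
        have h1 : HasDerivAt (fun s : ℝ => t - s) (-1) s := by
          simpa using (hasDerivAt_id s).const_sub t
        have := (h1.const_mul c).const_add 1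
        simpa using this
      have hpow : HasDerivAt (fun s : ℝ => (1 + c * (t - s)) ^ (-(1 / β)))
          (-c * (-(1 / β)) * (1 + c * (t - s)) ^ (-(1 / β) - 1)) s :=
        hinner.rpow_const (Or.inl (ne_of_gt hb))
      have hG' := hpow.const_mul lam
      refine hG'.congr_deriv (Eq.symm ?_)
      -- show γ * (G s) ^ (1+β) = lam * (-c * (-(1/β)) * base ^ (-(1/β)-1))
      have hGs : G s = lam * (1 + c * (t - s)) ^ (-(1 / β)) := rfl
      rw [hGs, Real.mul_rpow (le_of_lt hlam') (Real.rpow_nonneg (le_of_lt hb) _),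
        ← Real.rpow_mul (le_of_lt hb)]
      have hexp : -(1 / β) * (1 + β) = -(1 / β) - 1 := by
        field_simp
        ring
      rw [hexp]
      have hlampow : lam ^ (1 + β) = lam * lam ^ β := by
        rw [Real.rpow_add hlam' 1 β, Real.rpow_one]
      rw [hlampow, hc_def]
      field_simp
    -- continuity / integrability of the derivative
    have hcont : ContinuousOn (fun s => (G s) ^ (1 + β)) (Set.uIcc r t) := by
      have hb' : ∀ s ∈ Set.uIcc r t, (1 + c * (t - s)) ≠ 0 ∨ (0:ℝ) ≤ -(1 / β) := by
        intro s hs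
        rw [Set.uIcc_of_le hrt] at hs
        exact Or.inl (ne_of_gt (hbase s hs.2))
      have hcb : ContinuousOn (fun s : ℝ => 1 + c * (t - s)) (Set.uIcc r t) :=
        (continuous_const.add (continuous_const.mul (continuous_const.sub continuous_id))).continuousOn
      have hcG : ContinuousOn G (Set.uIcc r t) :=
        continuousOn_const.mul (hcb.rpow_const hb')
      exact hcG.rpow_const (fun x _ => Or.inr (le_of_lt h1β))
    have hint2 : IntervalIntegrable (fun s => (G s) ^ (1 + β)) volume r t :=
      hcont.intervalIntegrable
    have hint : IntervalIntegrable (fun s => γ * (G s) ^ (1 + β)) volume r t :=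
      (continuousOn_const.mul hcont).intervalIntegrable
    have hftc : (∫ s in r..t, γ * (G s) ^ (1 + β)) = G t - G r :=
      intervalIntegral.integral_eq_sub_of_hasDerivAt hderiv hint
    have hGt : G t = lam := by
      simp [hG_def]
    -- integrability of v^(1+β)
    set w : ℝ → ℝ := fun s => v s ^ (1 + β) with hw_def
    have heq_rt : ∀ x ∈ Set.uIoc r t, (G x) ^ (1 + β) = w x := by
      intro x hx
      rw [Set.uIoc_of_le hrt] at hx
      rw [hw_def]
      simp only
      rw [hvG x hx.2]
    have hwt : IntervalIntegrable w volume r t := by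
      refine hint2.congr ?_
      exact heq_rt
    have hwT : IntervalIntegrable w volume t T := by
      refine (intervalIntegrable_const (c := (0:ℝ))).congr ?_
      refine fun x hx => ?_
      rw [Set.uIoc_of_le hT] at hx
      rw [hw_def]
      simp only
      rw [hv x, if_neg (not_le.mpr hx.1)]
      exact (Real.zero_rpow (ne_of_gt h1β)).symm
    have hsplit : (∫ s in r..t, w s) + (∫ s in t..T, w s) = ∫ s in r..T, w s :=
      intervalIntegral.integral_add_adjacent_intervals hwt hwT
    have hzero : (∫ s in t..T, w s) = 0 := by
      rw [intervalIntegral.integral_congr_ae (g := fun _ => (0:ℝ))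
        (ae_of_all _ fun x hx => ?_)]
      · simp
      · rw [Set.uIoc_of_le hT] at hx
        rw [hw_def]
        simp only
        rw [hv x, if_neg (not_le.mpr hx.1)]
        exact Real.zero_rpow (ne_of_gt h1β)
    have hrtint : (∫ s in r..t, w s) = ∫ s in r..t, (G s) ^ (1 + β) :=
      (intervalIntegral.integral_congr_ae (μ := volume)
        (ae_of_all _ fun x hx => heq_rt x hx)).symm
    have hmain : γ * ∫ s in r..T, w s = lam - G r := by
      rw [← hsplit, hzero, add_zero, hrtint, ← hGt, ← hftc,
        intervalIntegral.integral_const_mul]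
    rw [hw_def] at hmain
    rw [hvG r hrt, hmain]
    ring
end

section
/- Let T>0, β∈(0,1], γ>0, and let μ be a finite nonnegative Borel measure on [0,T] and k≥0. Suppose v:[0,T]→ℝ₊ solves v(t) = k + μ([t,T]) − γ∫_t^T v(s)^{1+β} ds for all t∈[0,T]. Then v(r) ≤ μ([r,T]) + k/(1+γβ(T−r)k^β)^{1/β} for all r, and consequently sup over k of v(r) is at most μ([r,T]) + (γβ(T−r))^{−1/β}. -/
open MeasureTheory Set

theorem blow_up_upper_bound
    (T β γ k : ℝ) (hT : 0 < T) (hβ0 : 0 < β) (hβ1 : β ≤ 1) (hγ : 0 < γ) (hk : 0 ≤ k)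
    (μ : Measure ℝ) [IsFiniteMeasure μ]
    (v : ℝ → ℝ)
    (hv_nonneg : ∀ t ∈ Icc (0:ℝ) T, 0 ≤ v t)
    (hv_int : IntegrableOn (fun s => v s ^ (1 + β)) (Icc (0:ℝ) T))
    (heq : ∀ t ∈ Icc (0:ℝ) T,
        v t = k + (μ (Icc t T)).toReal - γ * ∫ s in t..T, v s ^ (1 + β)) :
    (∀ r ∈ Icc (0:ℝ) T,
        v r ≤ (μ (Icc r T)).toReal + k / (1 + γ * β * (T - r) * k ^ β) ^ (1 / β)) ∧
      ∀ r ∈ Ico (0:ℝ) T,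
        v r ≤ (μ (Icc r T)).toReal + (γ * β * (T - r)) ^ (-(1 / β)) := by
  have hβne : β ≠ 0 := ne_of_gt hβ0
  set f : ℝ → ℝ := fun s => v s ^ (1 + β) with hf_def
  have hf_nonneg : ∀ s ∈ Icc (0:ℝ) T, 0 ≤ f s := fun s hs =>
    Real.rpow_nonneg (hv_nonneg s hs) _
  have hf_int : ∀ t₁ ∈ Icc (0:ℝ) T, ∀ t₂ ∈ Icc (0:ℝ) T,
      IntervalIntegrable f volume t₁ t₂ := fun t₁ h₁ t₂ h₂ =>
    (hv_int.mono_set (uIcc_subset_Icc h₁ h₂)).intervalIntegrable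
  set g : ℝ → ℝ := fun t => k - γ * ∫ s in t..T, f s with hg_def
  have hTmem : T ∈ Icc (0:ℝ) T := ⟨hT.le, le_rfl⟩
  have hvg : ∀ t ∈ Icc (0:ℝ) T, v t = (μ (Icc t T)).toReal + g t := by
    intro t ht; rw [heq t ht]; ring
  have hg_diff : ∀ t₁ ∈ Icc (0:ℝ) T, ∀ t₂ ∈ Icc (0:ℝ) T,
      g t₂ - g t₁ = γ * ∫ s in t₁..t₂, f s := by
    intro t₁ h₁ t₂ h₂
    have h := intervalIntegral.integral_add_adjacent_intervals
      (hf_int t₁ h₁ t₂ h₂) (hf_int t₂ h₂ T hTmem)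
    simp only [hg_def]
    rw [← h]; ring
  have hg_le_k : ∀ t ∈ Icc (0:ℝ) T, g t ≤ k := by
    intro t ht
    have h0 : 0 ≤ ∫ s in t..T, f s :=
      intervalIntegral.integral_nonneg ht.2
        (fun s hs => hf_nonneg s ⟨le_trans ht.1 hs.1, hs.2⟩)
    have : 0 ≤ γ * ∫ s in t..T, f s := mul_nonneg hγ.le h0
    simp only [hg_def]; linarith
  have hgT : g T = k := by simp [hg_def]
  have hg_cont : ContinuousOn g (Icc (0:ℝ) T) := by
    have hI : IntegrableOn f (uIcc (0:ℝ) T) := by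
      rwa [uIcc_of_le hT.le]
    have := intervalIntegral.continuousOn_primitive_interval_left (a := 0) (b := T)
      (f := f) (μ := volume) hI
    rw [uIcc_of_le hT.le] at this
    exact continuousOn_const.sub (continuousOn_const.mul this)
  -- main pointwise bound on g
  have key : ∀ r ∈ Icc (0:ℝ) T,
      g r ≤ k * (1 + γ * β * (T - r) * k ^ β) ^ (-(1 / β)) := by
    intro r hr
    have hXpos : 0 < 1 + γ * β * (T - r) * k ^ β := by
      have h1 : 0 ≤ γ * β * (T - r) * k ^ β := by
        have : 0 ≤ T - r := by linarith [hr.2]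
        positivity
      linarith
    rcases le_or_gt (g r) 0 with hg0 | hg0
    · exact hg0.trans (by positivity)
    have hk' : 0 < k := lt_of_lt_of_le hg0 (hg_le_k r hr)
    set c : ℝ := γ * β * k ^ β with hc_def
    have hc : 0 < c := by positivity
    set w : ℝ → ℝ := fun t => k * (1 + c * (T - t)) ^ (-(1 / β)) with hw_def
    have hu_pos : ∀ t ∈ Icc r T, 0 < 1 + c * (T - t) := by
      intro t ht
      have : 0 ≤ c * (T - t) := mul_nonneg hc.le (by linarith [ht.2])
      linarith
    have hw_nonneg : ∀ t ∈ Icc r T, 0 ≤ w t := by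
      intro t ht
      have := hu_pos t ht
      positivity
    have hw_deriv : ∀ t ∈ Icc r T, HasDerivAt w (γ * w t ^ (1 + β)) t := by
      intro t ht
      have hu : HasDerivAt (fun t : ℝ => 1 + c * (T - t)) (c * -1) t :=
        (((hasDerivAt_id t).const_sub T).const_mul c).const_add 1
      have hupos := hu_pos t ht
      have hne : (1 + c * (T - t)) ≠ 0 := ne_of_gt hupos
      have h2 := (hu.rpow_const (p := -(1 / β)) (Or.inl hne)).const_mul k
      refine h2.congr_deriv ?_
      have hw_pow : w t ^ (1 + β)
          = k ^ (1 + β) * (1 + c * (T - t)) ^ ((-(1 / β)) * (1 + β)) := by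
        simp only [hw_def]
        rw [Real.mul_rpow hk'.le (Real.rpow_nonneg hupos.le _),
          ← Real.rpow_mul hupos.le]
      have hexp : (-(1 / β)) * (1 + β) = -(1 / β) - 1 := by
        field_simp
        ring
      have hkk : k ^ (1 + β) = k * k ^ β := by
        rw [Real.rpow_add hk', Real.rpow_one]
      rw [hw_pow, hexp, hkk, hc_def]
      field_simp
    have hw_cont : ContinuousOn w (Icc r T) := fun t ht =>
      ((hw_deriv t ht).continuousAt).continuousWithinAt
    have hwp_cont : ContinuousOn (fun t => w t ^ (1 + β)) (Icc r T) :=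
      hw_cont.rpow_const (fun t ht => Or.inr (by positivity))
    have hw'_cont : ContinuousOn (fun t => γ * w t ^ (1 + β)) (Icc r T) :=
      continuousOn_const.mul hwp_cont
    have hIcc_sub : Icc r T ⊆ Icc (0:ℝ) T := Icc_subset_Icc hr.1 le_rfl
    have hw_sub : ∀ t₁ ∈ Icc r T, ∀ t₂ ∈ Icc r T,
        w t₂ - w t₁ = γ * ∫ s in t₁..t₂, w s ^ (1 + β) := by
      intro t₁ h₁ t₂ h₂
      rw [← intervalIntegral.integral_const_mul]
      exact (intervalIntegral.integral_eq_sub_of_hasDerivAt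
        (fun t ht => hw_deriv t (uIcc_subset_Icc h₁ h₂ ht))
        ((hw'_cont.mono (uIcc_subset_Icc h₁ h₂)).intervalIntegrable)).symm
    have hwT : w T = k := by simp [hw_def]
    -- comparison argument
    by_contra hcon
    have hwr : w r = k * (1 + γ * β * (T - r) * k ^ β) ^ (-(1 / β)) := by
      simp only [hw_def]
      rw [show (1 + c * (T - r)) = 1 + γ * β * (T - r) * k ^ β by rw [hc_def]; ring]
    rw [← hwr] at hcon
    push_neg at hcon
    set S : Set ℝ := {t | t ∈ Icc r T ∧ g t ≤ w t} with hS_def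
    have hTS : T ∈ S := ⟨⟨hr.2, le_rfl⟩, by rw [hgT, hwT]⟩
    have hS_closed : IsClosed S := by
      have hcont : ContinuousOn (fun t => g t - w t) (Icc r T) :=
        (hg_cont.mono hIcc_sub).sub hw_cont
      have : S = Icc r T ∩ (fun t => g t - w t) ⁻¹' (Iic 0) := by
        ext t; simp [hS_def, sub_nonpos]
      rw [this]
      exact hcont.preimage_isClosed_of_isClosed isClosed_Icc isClosed_Iic
    have hS_bdd : BddBelow S := ⟨r, fun t ht => ht.1.1⟩
    set t₁ : ℝ := sInf S with ht₁_def
    have ht₁S : t₁ ∈ S := hS_closed.csInf_mem ⟨T, hTS⟩ hS_bdd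
    have hrt₁ : r ≤ t₁ := ht₁S.1.1
    have ht₁T : t₁ ≤ T := ht₁S.1.2
    have hlt : ∀ s ∈ Ico r t₁, w s < g s := by
      intro s hs
      by_contra hsle
      push_neg at hsle
      have : s ∈ S := ⟨⟨hs.1, le_trans hs.2.le ht₁T⟩, hsle⟩
      exact absurd (csInf_le hS_bdd this) (not_le.mpr hs.2)
    have hmem₁ : t₁ ∈ Icc (0:ℝ) T := hIcc_sub ht₁S.1
    have h1 : g t₁ - g r = γ * ∫ s in r..t₁, f s := hg_diff r hr t₁ hmem₁
    have h2 : w t₁ - w r = γ * ∫ s in r..t₁, w s ^ (1 + β) :=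
      hw_sub r ⟨le_rfl, hr.2⟩ t₁ ht₁S.1
    have hfint : IntervalIntegrable f volume r t₁ := hf_int r hr t₁ hmem₁
    have hwint : IntervalIntegrable (fun s => w s ^ (1 + β)) volume r t₁ :=
      (hwp_cont.mono (uIcc_subset_Icc ⟨le_rfl, hr.2⟩ ht₁S.1)).intervalIntegrable
    have h3 : (∫ s in r..t₁, w s ^ (1 + β)) ≤ ∫ s in r..t₁, f s := by
      refine intervalIntegral.integral_mono_ae_restrict hrt₁ hwint hfint ?_
      have hne : ∀ᵐ s : ℝ ∂(volume.restrict (Icc r t₁)), s ≠ t₁ := by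
        refine ae_restrict_of_ae ?_
        rw [ae_iff]
        have : {a : ℝ | ¬a ≠ t₁} = {t₁} := by ext a; simp
        rw [this]
        exact Real.volume_singleton
      filter_upwards [ae_restrict_mem measurableSet_Icc, hne] with s hs hsne
      have hsIco : s ∈ Ico r t₁ := ⟨hs.1, lt_of_le_of_ne hs.2 hsne⟩
      have hsIcc : s ∈ Icc r T := ⟨hsIco.1, le_trans hsIco.2.le ht₁T⟩
      have hgs : w s < g s := hlt s hsIco
      have hvs : g s ≤ v s := by
        have := hvg s (hIcc_sub hsIcc)
        have ha : 0 ≤ (μ (Icc s T)).toReal := ENNReal.toReal_nonneg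
        linarith
      exact Real.rpow_le_rpow (hw_nonneg s hsIcc) (le_trans hgs.le hvs) (by positivity)
    have hγh3 : γ * (∫ s in r..t₁, w s ^ (1 + β)) ≤ γ * ∫ s in r..t₁, f s :=
      mul_le_mul_of_nonneg_left h3 hγ.le
    have ht₁gw : g t₁ ≤ w t₁ := ht₁S.2
    linarith
  -- Part 1
  have part1 : ∀ r ∈ Icc (0:ℝ) T,
      v r ≤ (μ (Icc r T)).toReal + k / (1 + γ * β * (T - r) * k ^ β) ^ (1 / β) := by
    intro r hr
    have hXpos : 0 < 1 + γ * β * (T - r) * k ^ β := by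
      have h1 : 0 ≤ γ * β * (T - r) * k ^ β := by
        have : 0 ≤ T - r := by linarith [hr.2]
        positivity
      linarith
    have hconv : k * (1 + γ * β * (T - r) * k ^ β) ^ (-(1 / β))
        = k / (1 + γ * β * (T - r) * k ^ β) ^ (1 / β) := by
      rw [Real.rpow_neg hXpos.le]
      exact (div_eq_mul_inv _ _).symm
    rw [hvg r hr, ← hconv]
    linarith [key r hr]
  refine ⟨part1, ?_⟩
  -- Part 2
  intro r hr
  have hr' : r ∈ Icc (0:ℝ) T := ⟨hr.1, hr.2.le⟩
  have hD : 0 < γ * β * (T - r) := by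
    have : 0 < T - r := sub_pos.2 hr.2
    positivity
  have hsuf : k / (1 + γ * β * (T - r) * k ^ β) ^ (1 / β)
      ≤ (γ * β * (T - r)) ^ (-(1 / β)) := by
    rcases eq_or_lt_of_le hk with hk0 | hk'
    · rw [← hk0]
      simp only [zero_div]
      exact Real.rpow_nonneg hD.le _
    · have hkβ : (0:ℝ) < k ^ β := Real.rpow_pos_of_pos hk' β
      have hge : (γ * β * (T - r)) ^ (1 / β) * k
          ≤ (1 + γ * β * (T - r) * k ^ β) ^ (1 / β) := by
        have h1 : γ * β * (T - r) * k ^ β ≤ 1 + γ * β * (T - r) * k ^ β := by linarith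
        have h3 : (k ^ β) ^ (1 / β) = k := by
          rw [← Real.rpow_mul hk, mul_one_div, div_self hβne, Real.rpow_one]
        calc (γ * β * (T - r)) ^ (1 / β) * k
            = (γ * β * (T - r) * k ^ β) ^ (1 / β) := by
              rw [Real.mul_rpow hD.le hkβ.le, h3]
          _ ≤ (1 + γ * β * (T - r) * k ^ β) ^ (1 / β) :=
              Real.rpow_le_rpow (by positivity) h1 (by positivity)
      have hpos : 0 < (γ * β * (T - r)) ^ (1 / β) * k := by
        have := Real.rpow_pos_of_pos hD (1 / β)
        positivity
      calc k / (1 + γ * β * (T - r) * k ^ β) ^ (1 / β)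
          ≤ k / ((γ * β * (T - r)) ^ (1 / β) * k) :=
            div_le_div_of_nonneg_left hk hpos hge
        _ = ((γ * β * (T - r)) ^ (1 / β))⁻¹ := by
            rw [mul_comm, ← div_div, div_self (ne_of_gt hk'), one_div]
        _ = (γ * β * (T - r)) ^ (-(1 / β)) := (Real.rpow_neg hD.le _).symm
  linarith [part1 r hr']
end

section
/- Let x:[0,T]→ℝ be absolutely continuous with x(0)=x₀>0 and x(T)=0, and suppose x is not monotone (i.e., x' takes both signs on sets of positive measure). Define y(t) := x₀ + ∫_0^t x'(s)·1_{x'(s)<0} ds and τ := inf{t≥0 : y(t)=0}. Then y is nonincreasing, τ ≤ T, and the function x̃(t) := y(t∧τ) is absolutely continuous with x̃(0)=x₀, x̃(T)=0, and ∫_0^T |x̃'(t)|^p w(t) dt ≤ ∫_0^T |x'(t)|^p w(t) dt for every measurable w:[0,T]→ℝ₊, with strict inequality if w>0 a.e. and x is not monotone. -/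
open MeasureTheory Set

theorem monotone_improvement
    (T x₀ p : ℝ) (hT : 0 < T) (hp : 2 ≤ p) (hx₀ : 0 < x₀)
    (x x' : ℝ → ℝ)
    (hx'_meas : Measurable x')
    (hx'_int : IntervalIntegrable x' volume 0 T)
    (hFTC : ∀ t ∈ Icc (0:ℝ) T, x t = x₀ + ∫ s in (0:ℝ)..t, x' s)
    (hx0 : x 0 = x₀) (hxT : x T = 0)
    (hnotmono : 0 < volume {t ∈ Icc (0:ℝ) T | x' t < 0} ∧
        0 < volume {t ∈ Icc (0:ℝ) T | 0 < x' t})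
    (y : ℝ → ℝ)
    (hy : ∀ t, y t = x₀ + ∫ s in (0:ℝ)..t, min (x' s) 0)
    (τ : ℝ) (hτ : τ = sInf {t : ℝ | 0 ≤ t ∧ y t = 0})
    (xt' : ℝ → ℝ) (hxt' : ∀ t, xt' t = if t < τ then min (x' t) 0 else 0)
    (xt : ℝ → ℝ) (hxt : ∀ t, xt t = y (min t τ)) :
    AntitoneOn y (Icc (0:ℝ) T) ∧
    τ ≤ T ∧
    xt 0 = x₀ ∧ xt T = 0 ∧
    (∀ t ∈ Icc (0:ℝ) T, xt t = x₀ + ∫ s in (0:ℝ)..t, xt' s) ∧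
    (∀ w : ℝ → ℝ, (∀ t, 0 ≤ w t) → Measurable w →
        IntegrableOn (fun t => |x' t| ^ p * w t) (Icc (0:ℝ) T) →
        ((∫ t in (0:ℝ)..T, |xt' t| ^ p * w t) ≤ ∫ t in (0:ℝ)..T, |x' t| ^ p * w t ∧
          ((∀ᵐ t ∂(volume.restrict (Icc (0:ℝ) T)), 0 < w t) →
            (∫ t in (0:ℝ)..T, |xt' t| ^ p * w t) < ∫ t in (0:ℝ)..T, |x' t| ^ p * w t))) := by
  set f : ℝ → ℝ := fun s => min (x' s) 0 with hf_def
  have hf_nonpos : ∀ s, f s ≤ 0 := fun s => min_le_right _ _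
  have hf_int : IntervalIntegrable f volume 0 T := by
    have : f = fun s => (x' s - |x' s|) / 2 := by
      funext s
      rcases le_or_gt (x' s) 0 with h1 | h1
      · simp only [hf_def, min_eq_left h1, abs_of_nonpos h1]; ring
      · simp only [hf_def, min_eq_right h1.le, abs_of_pos h1]; ring
    rw [this]
    exact (hx'_int.sub hx'_int.abs).div_const 2
  have hf_int' : ∀ a b, a ∈ Icc (0:ℝ) T → b ∈ Icc (0:ℝ) T →
      IntervalIntegrable f volume a b := by
    intro a b ha hb
    refine hf_int.mono_set ?_
    rw [uIcc_of_le (by linarith [ha.1, hb.2] : (0:ℝ) ≤ T)]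
    exact uIcc_subset_Icc ha hb
  -- Antitone
  have hanti : AntitoneOn y (Icc (0:ℝ) T) := by
    intro a ha b hb hab
    have hsplit : ∫ s in (0:ℝ)..b, f s = (∫ s in (0:ℝ)..a, f s) + ∫ s in a..b, f s :=
      (intervalIntegral.integral_add_adjacent_intervals
        (hf_int' 0 a (left_mem_Icc.2 hT.le) ha) (hf_int' a b ha hb)).symm
    have hle : (∫ s in a..b, f s) ≤ 0 := by
      rw [intervalIntegral.integral_of_le hab]
      exact setIntegral_nonpos measurableSet_Ioc (fun u _ => hf_nonpos u)
    rw [hy a, hy b, hsplit]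
    linarith
  -- continuity of y on [0,T]
  have hy_cont : ContinuousOn y (Icc (0:ℝ) T) := by
    have : ContinuousOn (fun t => ∫ s in (0:ℝ)..t, f s) (uIcc (0:ℝ) T) :=
      intervalIntegral.continuousOn_primitive_interval' hf_int
        (by rw [uIcc_of_le hT.le]; exact left_mem_Icc.2 hT.le)
    rw [uIcc_of_le hT.le] at this
    have h2 : ContinuousOn (fun t => x₀ + ∫ s in (0:ℝ)..t, f s) (Icc (0:ℝ) T) :=
      continuousOn_const.add this
    exact ContinuousOn.congr h2 (fun t _ => hy t)
  have hy0 : y 0 = x₀ := by rw [hy 0]; simp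
  -- y T ≤ 0
  have hyT : y T ≤ 0 := by
    have hxint : ∫ s in (0:ℝ)..T, x' s = -x₀ := by
      have := hFTC T (right_mem_Icc.2 hT.le)
      rw [hxT] at this; linarith
    have hle : (∫ s in (0:ℝ)..T, f s) ≤ ∫ s in (0:ℝ)..T, x' s :=
      intervalIntegral.integral_mono_on hT.le hf_int hx'_int
        (fun s _ => min_le_left _ _)
    rw [hy T]; linarith
  -- root of y
  set S : Set ℝ := {t : ℝ | 0 ≤ t ∧ y t = 0} with hS_def
  obtain ⟨t₀, ht₀, hyt₀⟩ : ∃ t₀ ∈ Icc (0:ℝ) T, y t₀ = 0 := by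
    have := intermediate_value_Icc' hT.le hy_cont
    have h0 : (0:ℝ) ∈ Icc (y T) (y 0) := ⟨hyT, by rw [hy0]; exact hx₀.le⟩
    obtain ⟨c, hc, hyc⟩ := this h0
    exact ⟨c, hc, hyc⟩
  have hSne : S.Nonempty := ⟨t₀, ht₀.1, hyt₀⟩
  have hSbdd : BddBelow S := ⟨0, fun s hs => hs.1⟩
  have hτ_nonneg : 0 ≤ τ := hτ ▸ le_csInf hSne (fun s hs => hs.1)
  have hτ_le_t₀ : τ ≤ t₀ := hτ ▸ csInf_le hSbdd ⟨ht₀.1, hyt₀⟩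
  have hτT : τ ≤ T := hτ_le_t₀.trans ht₀.2
  have hτ_mem : τ ∈ Icc (0:ℝ) T := ⟨hτ_nonneg, hτT⟩
  -- y τ = 0
  have hyτ : y τ = 0 := by
    set S' : Set ℝ := S ∩ Icc 0 t₀ with hS'_def
    have ht₀S' : t₀ ∈ S' := ⟨⟨ht₀.1, hyt₀⟩, ht₀.1, le_rfl⟩
    have hS'ne : S'.Nonempty := ⟨t₀, ht₀S'⟩
    have hS'closed : IsClosed S' := by
      have hsub : Icc (0:ℝ) t₀ ⊆ Icc 0 T := Icc_subset_Icc le_rfl ht₀.2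
      have hcont : ContinuousOn y (Icc (0:ℝ) t₀) := hy_cont.mono hsub
      have : S' = Icc (0:ℝ) t₀ ∩ y ⁻¹' {0} := by
        ext s
        simp only [hS'_def, hS_def, mem_inter_iff, mem_setOf_eq, mem_Icc, mem_preimage,
          mem_singleton_iff]
        tauto
      rw [this]
      exact ContinuousOn.preimage_isClosed_of_isClosed hcont isClosed_Icc isClosed_singleton
    have hinf_eq : sInf S = sInf S' := by
      apply le_antisymm
      · exact csInf_le_csInf hSbdd hS'ne (inter_subset_left)
      · apply le_csInf hSne
        intro s hs
        rcases le_or_gt s t₀ with h | h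
        · exact csInf_le (hSbdd.mono inter_subset_left) ⟨hs, hs.1, h⟩
        · exact (csInf_le (hSbdd.mono inter_subset_left) ht₀S').trans h.le
    have hmem : sInf S' ∈ S' := hS'closed.csInf_mem hS'ne (hSbdd.mono inter_subset_left)
    rw [hτ, hinf_eq]
    exact hmem.1.2
  have hxt0 : xt 0 = x₀ := by rw [hxt 0, min_eq_left hτ_nonneg, hy0]
  have hxtT : xt T = 0 := by rw [hxt T, min_eq_right hτT, hyτ]
  -- xt' basics
  have hxt'_eq : xt' = (Iio τ).indicator f := by
    funext t
    rw [hxt' t]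
    by_cases h : t < τ <;> simp [indicator, h, hf_def]
  have hxt'_meas : Measurable xt' := by
    rw [hxt'_eq]
    exact (hx'_meas.min measurable_const).indicator measurableSet_Iio
  have habs_le : ∀ t, |xt' t| ≤ |x' t| := by
    intro t
    rw [hxt' t]
    split
    · rcases le_or_gt (x' t) 0 with h | h
      · rw [min_eq_left h]
      · rw [min_eq_right h.le]
        simp [abs_nonneg]
    · simp [abs_nonneg]
  have hxt'_int : ∀ a b, a ∈ Icc (0:ℝ) T → b ∈ Icc (0:ℝ) T →
      IntervalIntegrable xt' volume a b := by
    intro a b ha hb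
    rw [hxt'_eq]
    obtain ⟨h1, h2⟩ := hf_int' a b ha hb
    exact ⟨h1.indicator measurableSet_Iio, h2.indicator measurableSet_Iio⟩
  -- FTC for xt
  have hFTC2 : ∀ t ∈ Icc (0:ℝ) T, xt t = x₀ + ∫ s in (0:ℝ)..t, xt' s := by
    intro t ht
    have hne : ∀ c : ℝ, ∀ᵐ s : ℝ ∂(volume : Measure ℝ), s ≠ c := by
      intro c
      rw [ae_iff]
      simpa [not_not] using measure_singleton c
    rcases le_or_gt t τ with h | h
    · have hcongr : ∫ s in (0:ℝ)..t, xt' s = ∫ s in (0:ℝ)..t, f s := by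
        apply intervalIntegral.integral_congr_ae
        filter_upwards [hne t] with s hs hmem
        rw [uIoc_of_le ht.1] at hmem
        have : s < τ := lt_of_le_of_ne (hmem.2.trans h) (by
          intro hst
          exact hs (by linarith [hmem.2, hst] : s = t))
        rw [hxt' s, if_pos this]
      rw [hxt t, min_eq_left h, hy t, hcongr]
    · have hI1 : IntervalIntegrable xt' volume 0 τ :=
        hxt'_int 0 τ (left_mem_Icc.2 hT.le) hτ_mem
      have hI2 : IntervalIntegrable xt' volume τ t :=
        hxt'_int τ t hτ_mem ht
      have hsplit : (∫ s in (0:ℝ)..τ, xt' s) + ∫ s in τ..t, xt' s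
          = ∫ s in (0:ℝ)..t, xt' s :=
        intervalIntegral.integral_add_adjacent_intervals hI1 hI2
      have h2 : ∫ s in τ..t, xt' s = 0 := by
        rw [intervalIntegral.integral_congr (g := fun _ => (0:ℝ))
          (fun s hs => by
            rw [uIcc_of_le h.le] at hs
            rw [hxt' s, if_neg (not_lt.2 hs.1)]),
          intervalIntegral.integral_zero]
      have h1 : ∫ s in (0:ℝ)..τ, xt' s = ∫ s in (0:ℝ)..τ, f s := by
        apply intervalIntegral.integral_congr_ae
        filter_upwards [hne τ] with s hs hmem
        rw [uIoc_of_le hτ_nonneg] at hmem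
        have : s < τ := lt_of_le_of_ne hmem.2 hs
        rw [hxt' s, if_pos this]
      rw [hxt t, min_eq_right h.le, hy τ, ← hsplit, h2, h1, add_zero]
  refine ⟨hanti, hτT, hxt0, hxtT, hFTC2, ?_⟩
  -- main inequality
  intro w hw_nonneg hw_meas hw_int
  have hp0 : (0:ℝ) < p := by linarith
  set g1 : ℝ → ℝ := fun t => |xt' t| ^ p * w t with hg1_def
  set g2 : ℝ → ℝ := fun t => |x' t| ^ p * w t with hg2_def
  have hg_le : ∀ t, g1 t ≤ g2 t := fun t =>
    mul_le_mul_of_nonneg_right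
      (Real.rpow_le_rpow (abs_nonneg _) (habs_le t) hp0.le) (hw_nonneg t)
  have hg1_nonneg : ∀ t, 0 ≤ g1 t := fun t =>
    mul_nonneg (Real.rpow_nonneg (abs_nonneg _) _) (hw_nonneg t)
  have hg1_meas : Measurable g1 :=
    (((Real.continuous_rpow_const hp0.le).measurable).comp hxt'_meas.abs).mul hw_meas
  have hg1_int : IntegrableOn g1 (Icc (0:ℝ) T) := by
    refine Integrable.mono hw_int hg1_meas.aestronglyMeasurable ?_
    filter_upwards with t
    rw [Real.norm_eq_abs, Real.norm_eq_abs, abs_of_nonneg (hg1_nonneg t),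
      abs_of_nonneg (mul_nonneg (Real.rpow_nonneg (abs_nonneg _) _) (hw_nonneg t))]
    exact hg_le t
  have hIoc1 : IntegrableOn g1 (Ioc (0:ℝ) T) := hg1_int.mono_set Ioc_subset_Icc_self
  have hIoc2 : IntegrableOn g2 (Ioc (0:ℝ) T) := hw_int.mono_set Ioc_subset_Icc_self
  have hle : (∫ t in (0:ℝ)..T, g1 t) ≤ ∫ t in (0:ℝ)..T, g2 t := by
    rw [intervalIntegral.integral_of_le hT.le, intervalIntegral.integral_of_le hT.le]
    exact setIntegral_mono_on hIoc1 hIoc2 measurableSet_Ioc (fun t _ => hg_le t)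
  refine ⟨hle, ?_⟩
  intro hwpos
  rcases hle.lt_or_eq with hlt | heq
  · exact hlt
  exfalso
  have hzero : ∫ t in Ioc (0:ℝ) T, (g2 t - g1 t) = 0 := by
    rw [integral_sub hIoc2 hIoc1]
    rw [intervalIntegral.integral_of_le hT.le, intervalIntegral.integral_of_le hT.le] at heq
    linarith
  have hae : (fun t => g2 t - g1 t) =ᵐ[volume.restrict (Ioc (0:ℝ) T)] 0 := by
    refine (integral_eq_zero_iff_of_nonneg ?_ (hIoc2.sub hIoc1)).mp hzero
    intro t
    simpa using hg_le t
  have hwpos' : ∀ᵐ t ∂volume.restrict (Ioc (0:ℝ) T), 0 < w t :=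
    ae_restrict_of_ae_restrict_of_subset Ioc_subset_Icc_self hwpos
  have hbad : ∀ᵐ t ∂volume.restrict (Ioc (0:ℝ) T), ¬ (0 < x' t) := by
    filter_upwards [hae, hwpos'] with t h1 h2 h3
    have hxt'0 : xt' t = 0 := by
      rw [hxt' t]
      split
      · rw [min_eq_right h3.le]
      · rfl
    have hg1t : g1 t = 0 := by
      rw [hg1_def]
      simp only [hxt'0, abs_zero, Real.zero_rpow (ne_of_gt hp0), zero_mul]
    have hg2t : 0 < g2 t :=
      mul_pos (Real.rpow_pos_of_pos (abs_pos.2 h3.ne') _) h2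
    have : g2 t - g1 t = 0 := h1
    rw [hg1t, sub_zero] at this
    exact absurd this hg2t.ne'
  have hmeas0 : volume ({t | 0 < x' t} ∩ Ioc (0:ℝ) T) = 0 := by
    have := hbad
    rw [ae_iff] at this
    have h2 : (volume.restrict (Ioc (0:ℝ) T)) {a | 0 < x' a} = 0 := by
      simpa [not_not] using this
    rwa [Measure.restrict_apply (measurableSet_lt measurable_const hx'_meas)] at h2
  have hsub : {t | t ∈ Icc (0:ℝ) T ∧ 0 < x' t}
      ⊆ ({t | 0 < x' t} ∩ Ioc (0:ℝ) T) ∪ {0} := by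
    rintro t ⟨⟨h0, hT'⟩, hpos⟩
    rcases eq_or_lt_of_le h0 with he | hl
    · right; simp [← he]
    · left; exact ⟨hpos, hl, hT'⟩
  have : volume {t | t ∈ Icc (0:ℝ) T ∧ 0 < x' t} = 0 := by
    refine measure_mono_null hsub ?_
    refine measure_union_null hmeas0 ?_
    simp
  exact absurd this hnotmono.2.ne'
end
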